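/- Let 0 ≤ a < 1, 0 ≤ b < 1 and κ > 0. Then there exists a constant C > 0, depending only on a, b and κ, such that for every t > 0: ∫₀ᵗ (t−s)^{−a} e^{−κ(t−s)} (min{s,1})^{−b} ds ≤ C (min{t,1})^{1−a−b}. -/

import Mathlib

open MeasureTheory intervalIntegral Set

private lemma rpow_int_zero (r c : ℝ) (hr : -1 < r) :
    ∫ x in (0:ℝ)..c, x ^ r = c ^ (r + 1) / (r + 1) := by
  rw [integral_rpow (Or.inl hr), Real.zero_rpow (by linarith), sub_zero]

private lemma rev_rpow_int (r c t : ℝ) (hr : -1 < r) :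
    ∫ s in c..t, (t - s) ^ r = (t - c) ^ (r + 1) / (r + 1) := by
  have h := intervalIntegral.integral_comp_sub_left (a := c) (b := t) (fun u => u ^ r) t
  simp only [sub_self] at h
  rw [h, rpow_int_zero r (t - c) hr]

private lemma rev_rpow_intg (r c t : ℝ) (hr : -1 < r) :
    IntervalIntegrable (fun s => (t - s) ^ r) volume c t := by
  have h := (intervalIntegrable_rpow' (a := t - c) (b := t - t) hr).comp_sub_left t
  simpa [sub_sub_cancel] using h

private lemma exp_int_le (κ c d t : ℝ) (hκ : 0 < κ) (hdt : d ≤ t) :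
    ∫ s in c..d, Real.exp (-κ * (t - s)) ≤ 1 / κ := by
  have hconv : ∀ s : ℝ, Real.exp (-κ * (t - s)) = Real.exp (-κ * t) * Real.exp (κ * s) := by
    intro s; rw [← Real.exp_add]; ring_nf
  simp only [hconv]
  rw [intervalIntegral.integral_const_mul]
  have h1 : ∫ s in c..d, Real.exp (κ * s) = κ⁻¹ * (Real.exp (κ * d) - Real.exp (κ * c)) := by
    rw [intervalIntegral.integral_comp_mul_left (fun x => Real.exp x) (ne_of_gt hκ),
      integral_exp, smul_eq_mul]
  rw [h1]
  have hA : Real.exp (-κ * t) * Real.exp (κ * d) ≤ 1 := by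
    rw [← Real.exp_add]; exact Real.exp_le_one_iff.mpr (by nlinarith)
  have hB : 0 < Real.exp (-κ * t) * Real.exp (κ * c) := by positivity
  have hκi : 0 < κ⁻¹ := inv_pos.mpr hκ
  rw [div_eq_mul_inv, one_mul]
  nlinarith [Real.exp_pos (-κ * t)]

private lemma beta_bound (a b t : ℝ) (ha0 : 0 ≤ a) (ha1 : a < 1) (hb0 : 0 ≤ b) (hb1 : b < 1)
    (ht : 0 < t) :
    IntervalIntegrable (fun s => (t - s) ^ (-a) * s ^ (-b)) volume 0 t ∧
    ∫ s in (0:ℝ)..t, (t - s) ^ (-a) * s ^ (-b) ≤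
      (2 / (1 - a) + 2 / (1 - b)) * t ^ (1 - a - b) := by
  set m := t / 2 with hm_def
  have hm : 0 < m := by positivity
  have hmt : m < t := by simp only [hm_def]; linarith
  have hra : (-1:ℝ) < -a := by linarith
  have hrb : (-1:ℝ) < -b := by linarith
  -- continuity pieces
  have hc1 : ContinuousOn (fun s : ℝ => (t - s) ^ (-a)) (Set.uIcc 0 m) := by
    apply ContinuousOn.rpow_const (by fun_prop)
    intro x hx
    rw [Set.uIcc_of_le hm.le] at hx
    exact Or.inl (by have := hx.2; intro h; nlinarith [hx.1, hx.2])
  have hc2 : ContinuousOn (fun s : ℝ => s ^ (-b)) (Set.uIcc m t) := by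
    apply ContinuousOn.rpow_const (by fun_prop)
    intro x hx
    rw [Set.uIcc_of_le hmt.le] at hx
    exact Or.inl (by intro h; nlinarith [hx.1])
  have i1 : IntervalIntegrable (fun s => (t - s) ^ (-a) * s ^ (-b)) volume 0 m :=
    (intervalIntegrable_rpow' hrb).continuousOn_mul hc1
  have i2 : IntervalIntegrable (fun s => (t - s) ^ (-a) * s ^ (-b)) volume m t :=
    (rev_rpow_intg (-a) m t hra).mul_continuousOn hc2
  refine ⟨i1.trans i2, ?_⟩
  rw [← intervalIntegral.integral_add_adjacent_intervals i1 i2]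
  -- bound first piece
  have b1 : ∫ s in (0:ℝ)..m, (t - s) ^ (-a) * s ^ (-b) ≤ m ^ (-a) * (m ^ (-b + 1) / (-b + 1)) := by
    have mono : ∫ s in (0:ℝ)..m, (t - s) ^ (-a) * s ^ (-b)
        ≤ ∫ s in (0:ℝ)..m, m ^ (-a) * s ^ (-b) := by
      apply intervalIntegral.integral_mono_on hm.le i1
        ((intervalIntegrable_rpow' hrb).const_mul _)
      intro x hx
      apply mul_le_mul_of_nonneg_right _ (Real.rpow_nonneg hx.1 _)
      exact Real.rpow_le_rpow_of_nonpos hm (by linarith [hx.2] : m ≤ t - x) (by linarith)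
    rw [intervalIntegral.integral_const_mul, rpow_int_zero (-b) m hrb] at mono
    exact mono
  -- bound second piece
  have b2 : ∫ s in m..t, (t - s) ^ (-a) * s ^ (-b) ≤ m ^ (-b) * ((t - m) ^ (-a + 1) / (-a + 1)) := by
    have mono : ∫ s in m..t, (t - s) ^ (-a) * s ^ (-b)
        ≤ ∫ s in m..t, (t - s) ^ (-a) * m ^ (-b) := by
      apply intervalIntegral.integral_mono_on hmt.le i2
        ((rev_rpow_intg (-a) m t hra).mul_const _)
      intro x hx
      apply mul_le_mul_of_nonneg_left _ (Real.rpow_nonneg (by linarith [hx.2]) _)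
      exact Real.rpow_le_rpow_of_nonpos hm hx.1 (by linarith)
    rw [intervalIntegral.integral_mul_const, rev_rpow_int (-a) m t hra, mul_comm] at mono
    exact mono
  have htm : t - m = m := by simp only [hm_def]; ring
  rw [htm] at b2
  -- combine
  have ekey : ∀ x y : ℝ, m ^ x * m ^ y = m ^ (x + y) := fun x y => (Real.rpow_add hm x y).symm
  have key1 : m ^ (-a) * (m ^ (-b + 1) / (-b + 1)) = m ^ (1 - a - b) / (1 - b) := by
    have e1 : (-b + 1 : ℝ) = 1 - b := by ring
    have e2 : (-a + (1 - b) : ℝ) = 1 - a - b := by ring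
    rw [e1, mul_div_assoc', ekey, e2]
  have key2 : m ^ (-b) * (m ^ (-a + 1) / (-a + 1)) = m ^ (1 - a - b) / (1 - a) := by
    have e1 : (-a + 1 : ℝ) = 1 - a := by ring
    have e2 : (-b + (1 - a) : ℝ) = 1 - a - b := by ring
    rw [e1, mul_div_assoc', ekey, e2]
  rw [key1] at b1; rw [key2] at b2
  have hmc : m ^ (1 - a - b) ≤ 2 * t ^ (1 - a - b) := by
    rw [hm_def, Real.div_rpow ht.le (by norm_num : (0:ℝ) ≤ 2)]
    have h2c : (1:ℝ)/2 ≤ (2:ℝ) ^ (1 - a - b) := by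
      calc (1:ℝ)/2 = (2:ℝ) ^ (-1 : ℝ) := by rw [Real.rpow_neg_one]; norm_num
      _ ≤ _ := Real.rpow_le_rpow_of_exponent_le (by norm_num) (by linarith)
    have h := div_le_div_of_nonneg_left (Real.rpow_nonneg ht.le (1 - a - b))
      (by norm_num : (0:ℝ) < 1/2) h2c
    rw [div_div_eq_mul_div, div_eq_mul_inv] at h
    rw [div_eq_mul_inv]
    linarith [h]
  have ia : (0:ℝ) < (1 - a)⁻¹ := inv_pos.mpr (by linarith)
  have ib : (0:ℝ) < (1 - b)⁻¹ := inv_pos.mpr (by linarith)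
  have p1 := mul_le_mul_of_nonneg_right hmc ia.le
  have p2 := mul_le_mul_of_nonneg_right hmc ib.le
  have expand : (2 / (1 - a) + 2 / (1 - b)) * t ^ (1 - a - b)
      = 2 * t ^ (1 - a - b) * (1 - a)⁻¹ + 2 * t ^ (1 - a - b) * (1 - b)⁻¹ := by
    field_simp
  rw [expand]
  have q1 : m ^ (1 - a - b) / (1 - b) = m ^ (1 - a - b) * (1 - b)⁻¹ := div_eq_mul_inv _ _
  have q2 : m ^ (1 - a - b) / (1 - a) = m ^ (1 - a - b) * (1 - a)⁻¹ := div_eq_mul_inv _ _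
  rw [q1] at b1; rw [q2] at b2
  linarith


/-- Weighted convolution estimate: a weakly singular, exponentially damped kernel
convolved against the weight `min{s,1}^{-b}`. -/
theorem convolution_min_weight_estimate
    (a b κ : ℝ) (ha0 : 0 ≤ a) (ha1 : a < 1) (hb0 : 0 ≤ b) (hb1 : b < 1) (hκ : 0 < κ) :
    ∃ C > 0, ∀ t : ℝ, 0 < t →
      (∫ s in Set.Ioo (0:ℝ) t, (t - s) ^ (-a) * Real.exp (-κ * (t - s)) * (min s 1) ^ (-b))
        ≤ C * (min t 1) ^ (1 - a - b) := by
  have h1a : (0:ℝ) < 1 - a := by linarith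
  have h1b : (0:ℝ) < 1 - b := by linarith
  have hra : (-1:ℝ) < -a := by linarith
  have hrb : (-1:ℝ) < -b := by linarith
  set K : ℝ := 2 / (1 - a) + 2 / (1 - b) with hK_def
  have hK : 0 < K := by positivity
  set M1 : ℝ := 3 * K + 3 / (1 - a) with hM1_def
  have hM1 : 0 < M1 := by positivity
  set M2 : ℝ := 1 / (1 - b) + 1 / κ + 1 / (1 - a) with hM2_def
  have hM2 : 0 < M2 := by positivity
  refine ⟨K + M1 + M2, by positivity, ?_⟩
  set C : ℝ := K + M1 + M2 with hC_def
  have hKC : K ≤ C := by rw [hC_def]; linarith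
  have hM1C : M1 ≤ C := by rw [hC_def]; linarith
  have hM2C : M2 ≤ C := by rw [hC_def]; linarith
  clear_value K M1 M2 C
  intro t ht
  set g : ℝ → ℝ := fun s => (t - s) ^ (-a) * Real.exp (-κ * (t - s)) * (min s 1) ^ (-b)
    with hg_def
  -- measurability
  have hgmeas : Measurable g := by
    rw [hg_def]; fun_prop
  -- basic pointwise facts on [0, t]
  have hAnn : ∀ x ∈ Set.Icc (0:ℝ) t, 0 ≤ (t - x) ^ (-a) :=
    fun x hx => Real.rpow_nonneg (by linarith [hx.2]) _
  have hEle : ∀ x ∈ Set.Icc (0:ℝ) t, Real.exp (-κ * (t - x)) ≤ 1 := by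
    intro x hx
    exact Real.exp_le_one_iff.mpr (by nlinarith [hx.2])
  have hMnn : ∀ x ∈ Set.Icc (0:ℝ) t, 0 ≤ (min x 1) ^ (-b) :=
    fun x hx => Real.rpow_nonneg (le_min hx.1 zero_le_one) _
  have hMle : ∀ x ∈ Set.Icc (0:ℝ) t, (min x 1) ^ (-b) ≤ x ^ (-b) + 1 := by
    intro x hx
    rcases le_total x 1 with h | h
    · rw [min_eq_left h]
      nlinarith [Real.rpow_nonneg hx.1 (-b)]
    · rw [min_eq_right h, Real.one_rpow]
      nlinarith [Real.rpow_nonneg hx.1 (-b)]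
  -- the dominating function
  set h : ℝ → ℝ := fun s => (t - s) ^ (-a) * s ^ (-b) + (t - s) ^ (-a) with hh_def
  have hh_int : IntervalIntegrable h volume 0 t :=
    (beta_bound a b t ha0 ha1 hb0 hb1 ht).1.add (rev_rpow_intg (-a) 0 t hra)
  have hgh : ∀ x ∈ Set.Icc (0:ℝ) t, g x ≤ h x := by
    intro x hx
    calc (t - x) ^ (-a) * Real.exp (-κ * (t - x)) * (min x 1) ^ (-b)
        ≤ (t - x) ^ (-a) * 1 * (min x 1) ^ (-b) :=
          mul_le_mul_of_nonneg_right
            (mul_le_mul_of_nonneg_left (hEle x hx) (hAnn x hx)) (hMnn x hx)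
      _ = (t - x) ^ (-a) * (min x 1) ^ (-b) := by ring
      _ ≤ (t - x) ^ (-a) * (x ^ (-b) + 1) :=
          mul_le_mul_of_nonneg_left (hMle x hx) (hAnn x hx)
      _ = h x := by rw [hh_def]; ring
  have hgnn : ∀ x ∈ Set.Icc (0:ℝ) t, 0 ≤ g x := by
    intro x hx
    exact mul_nonneg (mul_nonneg (hAnn x hx) (Real.exp_pos _).le) (hMnn x hx)
  have hg_int : IntervalIntegrable g volume 0 t := by
    apply hh_int.mono_fun hgmeas.aestronglyMeasurable
    filter_upwards [ae_restrict_mem measurableSet_uIoc] with x hx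
    rw [Set.uIoc_of_le ht.le] at hx
    have hx' : x ∈ Set.Icc (0:ℝ) t := ⟨hx.1.le, hx.2⟩
    rw [Real.norm_of_nonneg (hgnn x hx')]
    exact (hgh x hx').trans (le_abs_self _)
  have conv : (∫ s in Set.Ioo (0:ℝ) t, g s) = ∫ s in (0:ℝ)..t, g s := by
    rw [intervalIntegral.integral_of_le ht.le, integral_Ioc_eq_integral_Ioo]
  show (∫ s in Set.Ioo (0:ℝ) t, g s) ≤ C * (min t 1) ^ (1 - a - b)
  rw [conv]
  rcases le_or_gt t 1 with ht1 | ht1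
  · -- small time: t ≤ 1
    rw [min_eq_left ht1]
    have mono : ∫ s in (0:ℝ)..t, g s ≤ ∫ s in (0:ℝ)..t, (t - s) ^ (-a) * s ^ (-b) := by
      apply intervalIntegral.integral_mono_on ht.le hg_int
        (beta_bound a b t ha0 ha1 hb0 hb1 ht).1
      intro x hx
      have hmin : min x 1 = x := min_eq_left (hx.2.trans ht1)
      calc g x = (t - x) ^ (-a) * Real.exp (-κ * (t - x)) * x ^ (-b) := by
            rw [hg_def]; simp only [hmin]
        _ ≤ (t - x) ^ (-a) * 1 * x ^ (-b) :=
            mul_le_mul_of_nonneg_right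
              (mul_le_mul_of_nonneg_left (hEle x hx) (hAnn x hx))
              (Real.rpow_nonneg hx.1 _)
        _ = (t - x) ^ (-a) * x ^ (-b) := by ring
    refine mono.trans (((beta_bound a b t ha0 ha1 hb0 hb1 ht).2).trans ?_)
    apply mul_le_mul_of_nonneg_right _ (Real.rpow_nonneg ht.le _)
    rw [← hK_def]; exact hKC
  · -- large time: 1 < t
    rw [min_eq_right ht1.le, Real.one_rpow, mul_one]
    rcases le_or_gt t 3 with ht3 | ht3
    · -- 1 < t ≤ 3
      have mono : ∫ s in (0:ℝ)..t, g s ≤ ∫ s in (0:ℝ)..t, h s :=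
        intervalIntegral.integral_mono_on ht.le hg_int hh_int hgh
      have split : ∫ s in (0:ℝ)..t, h s
          = (∫ s in (0:ℝ)..t, (t - s) ^ (-a) * s ^ (-b)) + ∫ s in (0:ℝ)..t, (t - s) ^ (-a) :=
        intervalIntegral.integral_add (beta_bound a b t ha0 ha1 hb0 hb1 ht).1
          (rev_rpow_intg (-a) 0 t hra)
      have tpow3 : t ^ (1 - a - b) ≤ 3 := by
        rcases le_or_gt (1 - a - b) 0 with hc | hc
        · have := Real.rpow_le_one_of_one_le_of_nonpos ht1.le hc
          linarith
        · calc t ^ (1 - a - b) ≤ (3:ℝ) ^ (1 - a - b) :=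
              Real.rpow_le_rpow ht.le ht3 hc.le
            _ ≤ (3:ℝ) ^ (1:ℝ) := Real.rpow_le_rpow_of_exponent_le (by norm_num) (by linarith)
            _ = 3 := by rw [Real.rpow_one]
      have part1 : ∫ s in (0:ℝ)..t, (t - s) ^ (-a) * s ^ (-b) ≤ K * 3 := by
        refine ((beta_bound a b t ha0 ha1 hb0 hb1 ht).2).trans ?_
        rw [← hK_def]
        exact mul_le_mul_of_nonneg_left tpow3 hK.le
      have part2 : ∫ s in (0:ℝ)..t, (t - s) ^ (-a) ≤ 3 / (1 - a) := by
        rw [rev_rpow_int (-a) 0 t hra, sub_zero]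
        have e1 : (-a + 1 : ℝ) = 1 - a := by ring
        rw [e1]
        have htp : t ^ (1 - a) ≤ 3 := by
          calc t ^ (1 - a) ≤ (3:ℝ) ^ (1 - a) := Real.rpow_le_rpow ht.le ht3 h1a.le
            _ ≤ (3:ℝ) ^ (1:ℝ) := Real.rpow_le_rpow_of_exponent_le (by norm_num) (by linarith)
            _ = 3 := by rw [Real.rpow_one]
        gcongr
      calc ∫ s in (0:ℝ)..t, g s ≤ _ := mono
        _ = _ := split
        _ ≤ K * 3 + 3 / (1 - a) := add_le_add part1 part2
        _ ≤ C := le_trans (by rw [hM1_def]; linarith) hM1C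
    · -- t > 3
      have h2t : (1:ℝ) ≤ t - 1 := by linarith
      have sub1 : Set.uIcc (0:ℝ) 1 ⊆ Set.uIcc 0 t := by
        rw [Set.uIcc_of_le ht.le, Set.uIcc_of_le zero_le_one]
        exact Set.Icc_subset_Icc le_rfl ht1.le
      have sub2 : Set.uIcc (1:ℝ) (t-1) ⊆ Set.uIcc 0 t := by
        rw [Set.uIcc_of_le ht.le, Set.uIcc_of_le h2t]
        exact Set.Icc_subset_Icc zero_le_one (by linarith)
      have sub3 : Set.uIcc (t-1) t ⊆ Set.uIcc 0 t := by
        rw [Set.uIcc_of_le ht.le, Set.uIcc_of_le (by linarith : t - 1 ≤ t)]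
        exact Set.Icc_subset_Icc (by linarith) le_rfl
      have g1 := hg_int.mono_set sub1
      have g2 := hg_int.mono_set sub2
      have g3 := hg_int.mono_set sub3
      have split2 : ∫ s in (0:ℝ)..t, g s
          = (∫ s in (0:ℝ)..1, g s) + (∫ s in (1:ℝ)..(t-1), g s) + ∫ s in (t-1)..t, g s := by
        rw [intervalIntegral.integral_add_adjacent_intervals g1 g2,
          intervalIntegral.integral_add_adjacent_intervals (g1.trans g2) g3]
      have sInIcc : ∀ c d : ℝ, 0 ≤ c → d ≤ t → ∀ x ∈ Set.Icc c d, x ∈ Set.Icc (0:ℝ) t :=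
        fun c d hc hd x hx => ⟨hc.trans hx.1, hx.2.trans hd⟩
      -- piece 1
      have p1 : ∫ s in (0:ℝ)..1, g s ≤ 1 / (1 - b) := by
        have mono1 : ∫ s in (0:ℝ)..1, g s ≤ ∫ s in (0:ℝ)..1, s ^ (-b) := by
          apply intervalIntegral.integral_mono_on zero_le_one g1
            (intervalIntegrable_rpow' hrb)
          intro x hx
          have hx' := sInIcc 0 1 le_rfl ht1.le x hx
          have hA1 : (t - x) ^ (-a) ≤ 1 :=
            Real.rpow_le_one_of_one_le_of_nonpos (by linarith [hx.2]) (by linarith)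
          have hmin : min x 1 = x := min_eq_left hx.2
          calc g x = (t - x) ^ (-a) * Real.exp (-κ * (t - x)) * x ^ (-b) := by
                rw [hg_def]; simp only [hmin]
            _ ≤ 1 * 1 * x ^ (-b) :=
              mul_le_mul_of_nonneg_right
                (mul_le_mul hA1 (hEle x hx') (Real.exp_pos _).le zero_le_one)
                (Real.rpow_nonneg hx.1 _)
            _ = x ^ (-b) := by ring
        refine mono1.trans ?_
        rw [rpow_int_zero (-b) 1 hrb, Real.one_rpow]
        have e1 : (-b + 1 : ℝ) = 1 - b := by ring
        rw [e1]
      -- piece 2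
      have p2 : ∫ s in (1:ℝ)..(t-1), g s ≤ 1 / κ := by
        have mono2 : ∫ s in (1:ℝ)..(t-1), g s
            ≤ ∫ s in (1:ℝ)..(t-1), Real.exp (-κ * (t - s)) := by
          apply intervalIntegral.integral_mono_on h2t g2
            ((Real.continuous_exp.comp
              (continuous_const.mul (continuous_const.sub continuous_id))).intervalIntegrable _ _)
          intro x hx
          have hA1 : (t - x) ^ (-a) ≤ 1 :=
            Real.rpow_le_one_of_one_le_of_nonpos (by linarith [hx.2]) (by linarith)
          have hmin : min x 1 = 1 := min_eq_right hx.1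
          calc g x = (t - x) ^ (-a) * Real.exp (-κ * (t - x)) * 1 := by
                rw [hg_def]; simp only [hmin, Real.one_rpow]
            _ = (t - x) ^ (-a) * Real.exp (-κ * (t - x)) := by ring
            _ ≤ 1 * Real.exp (-κ * (t - x)) :=
              mul_le_mul_of_nonneg_right hA1 (Real.exp_pos _).le
            _ = Real.exp (-κ * (t - x)) := by ring
        exact mono2.trans (exp_int_le κ 1 (t-1) t hκ (by linarith))
      -- piece 3
      have p3 : ∫ s in (t-1)..t, g s ≤ 1 / (1 - a) := by
        have mono3 : ∫ s in (t-1)..t, g s ≤ ∫ s in (t-1)..t, (t - s) ^ (-a) := by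
          apply intervalIntegral.integral_mono_on (by linarith) g3 (rev_rpow_intg (-a) (t-1) t hra)
          intro x hx
          have hx' := sInIcc (t-1) t (by linarith) le_rfl x hx
          have hmin : min x 1 = 1 := min_eq_right (by linarith [hx.1])
          calc g x = (t - x) ^ (-a) * Real.exp (-κ * (t - x)) * 1 := by
                rw [hg_def]; simp only [hmin, Real.one_rpow]
            _ ≤ (t - x) ^ (-a) * 1 * 1 :=
              mul_le_mul_of_nonneg_right
                (mul_le_mul_of_nonneg_left (hEle x hx') (hAnn x hx')) zero_le_one
            _ = (t - x) ^ (-a) := by ring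
        refine mono3.trans ?_
        rw [rev_rpow_int (-a) (t-1) t hra, sub_sub_cancel, Real.one_rpow]
        have e1 : (-a + 1 : ℝ) = 1 - a := by ring
        rw [e1]
      calc ∫ s in (0:ℝ)..t, g s = _ := split2
        _ ≤ 1 / (1 - b) + 1 / κ + 1 / (1 - a) := by linarith [p1, p2, p3]
        _ ≤ C := le_of_eq hM2_def.symm |>.trans hM2C
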